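/- If σ ∈ {±1}^n is a vector of 4-wise independent uniform random signs and v ∈ ℝ^n is a fixed nonzero vector, then P(⟨σ, v⟩² ≥ (2/3)‖v‖₂²) ≥ 1/27. -/

import Mathlib

open MeasureTheory ProbabilityTheory

/-- The distribution of a uniform random sign in `{−1, +1}`. -/
noncomputable def signMeasure : Measure ℝ :=
  ((1 : ENNReal) / 2) • Measure.dirac (1 : ℝ) + ((1 : ENNReal) / 2) • Measure.dirac (-1 : ℝ)

lemma signMeasure_integral_id : ∫ x, x ∂signMeasure = 0 := by
  have hint : ∀ c : ℝ, Integrable (fun x : ℝ => x) (((1:ENNReal)/2) • Measure.dirac c) := by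
    intro c
    refine Integrable.smul_measure ⟨measurable_id.aestronglyMeasurable, ?_⟩ (by simp)
    rw [HasFiniteIntegral, lintegral_dirac]
    exact ENNReal.coe_lt_top
  rw [signMeasure, integral_add_measure (hint 1) (hint (-1)), integral_smul_measure,
    integral_smul_measure, integral_dirac, integral_dirac]
  norm_num

/-- For 4-wise independent uniform signs `σ` and a fixed nonzero vector `v`,
`P(⟨σ,v⟩² ≥ (2/3)‖v‖₂²) ≥ 1/27`. -/
theorem stmt_6 {Ω : Type*} [MeasurableSpace Ω] (μ : Measure Ω) (hμ : IsProbabilityMeasure μ)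
    (n : ℕ) (σ : Ω → Fin n → ℝ)
    (hmeas : ∀ i, Measurable fun ω => σ ω i)
    (hsign : ∀ ω i, σ ω i = 1 ∨ σ ω i = -1)
    (hunif : ∀ i, Measure.map (fun ω => σ ω i) μ = signMeasure)
    (hindep : ∀ s : Finset (Fin n), s.card ≤ 4 →
      iIndepFun (m := fun _ : s => (inferInstance : MeasurableSpace ℝ))
        (fun (i : s) (ω : Ω) => σ ω (i : Fin n)) μ)
    (v : Fin n → ℝ) (hv : v ≠ 0) :
    (1 : ℝ) / 27 ≤ (μ {ω | 2 / 3 * ∑ i, v i ^ 2 ≤ (∑ i, σ ω i * v i) ^ 2}).toReal := by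
  classical
  set A : ℝ := ∑ i, v i ^ 2 with hAdef
  -- A is positive
  have hA0 : 0 < A := by
    obtain ⟨i0, hi0⟩ : ∃ i, v i ≠ 0 := by
      by_contra h; push_neg at h; exact hv (funext h)
    exact Finset.sum_pos' (fun i _ => sq_nonneg _)
      ⟨i0, Finset.mem_univ _, by positivity⟩
  -- basic facts about signs
  have sq1 : ∀ ω i, σ ω i * σ ω i = 1 := by
    intro ω i; rcases hsign ω i with h | h <;> rw [h] <;> norm_num
  have sabs : ∀ ω i, |σ ω i| = 1 := by
    intro ω i; rcases hsign ω i with h | h <;> rw [h] <;> norm_num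
  -- expectation of a single sign is zero
  have sint : ∀ i, ∫ ω, σ ω i ∂μ = 0 := by
    intro i
    have h1 : ∫ ω, σ ω i ∂μ = ∫ x, x ∂(Measure.map (fun ω => σ ω i) μ) := by
      exact (integral_map (hmeas i).aemeasurable measurable_id.aestronglyMeasurable).symm
    rw [h1, hunif i, signMeasure_integral_id]
  -- integrability of bounded measurable functions
  have intble : ∀ (f : Ω → ℝ) (C : ℝ), Measurable f → (∀ ω, |f ω| ≤ C) → Integrable f μ := by
    intro f C hf hC
    exact (integrable_const C).mono' hf.aestronglyMeasurable
      (Filter.Eventually.of_forall (fun ω => by simpa using hC ω))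
  -- expectation of a product of distinct signs is zero
  have prodzero : ∀ t : Finset (Fin n), t.Nonempty → t.card ≤ 4 →
      ∫ ω, ∏ i ∈ t, σ ω i ∂μ = 0 := by
    intro t ht hc
    obtain ⟨j, hj⟩ := ht
    have hind := hindep t hc
    have h1 : IndepFun (∏ i ∈ Finset.univ.erase (⟨j, hj⟩ : t),
        (fun (i : t) (ω : Ω) => σ ω (i : Fin n)) i)
        ((fun (i : t) (ω : Ω) => σ ω (i : Fin n)) ⟨j, hj⟩) μ :=
      hind.indepFun_finsetProd_of_notMem (fun i => hmeas i) (Finset.notMem_erase _ _)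
    have h2 : ∀ ω, (∏ i ∈ t, σ ω i) =
        ((∏ i ∈ Finset.univ.erase (⟨j, hj⟩ : t),
          (fun (i : t) (ω : Ω) => σ ω (i : Fin n)) i) ω) * σ ω j := by
      intro ω
      rw [Finset.prod_apply]
      have h3 := Finset.prod_erase_mul (Finset.univ : Finset t)
        (fun i : t => σ ω (i : Fin n)) (Finset.mem_univ (⟨j, hj⟩ : t))
      rw [h3, Finset.univ_eq_attach, Finset.prod_attach t (fun i => σ ω i)]
    calc ∫ ω, ∏ i ∈ t, σ ω i ∂μ
        = ∫ ω, ((∏ i ∈ Finset.univ.erase (⟨j, hj⟩ : t),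
            (fun (i : t) (ω : Ω) => σ ω (i : Fin n)) i) ω) * σ ω j ∂μ := by
          exact integral_congr_ae (Filter.Eventually.of_forall (fun ω => h2 ω))
      _ = (∫ ω, (∏ i ∈ Finset.univ.erase (⟨j, hj⟩ : t),
            (fun (i : t) (ω : Ω) => σ ω (i : Fin n)) i) ω ∂μ) * ∫ ω, σ ω j ∂μ := by
          refine h1.integral_fun_mul_eq_mul_integral ?_ ?_
          · refine Measurable.aestronglyMeasurable ?_
            rw [Finset.prod_fn]
            exact Finset.measurable_prod _ (fun i _ => hmeas (i : Fin n))
          · exact (hmeas j).aestronglyMeasurable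
      _ = 0 := by rw [sint j, mul_zero]
  -- expectation of σ_a σ_b
  have pairint : ∀ a b : Fin n, a ≠ b → ∫ ω, σ ω a * σ ω b ∂μ = 0 := by
    intro a b hab
    have h1 : ∀ ω, σ ω a * σ ω b = ∏ i ∈ ({a, b} : Finset (Fin n)), σ ω i := by
      intro ω; rw [Finset.prod_pair hab]
    simp_rw [h1]
    exact prodzero _ ⟨a, by simp⟩ (le_trans (Finset.card_insert_le _ _) (by simp))
  -- expectation of four distinct signs
  have quadint : ∀ a b c d : Fin n, a ≠ b → a ≠ c → a ≠ d → b ≠ c → b ≠ d → c ≠ d →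
      ∫ ω, σ ω a * σ ω b * σ ω c * σ ω d ∂μ = 0 := by
    intro a b c d hab hac had hbc hbd hcd
    have h1 : ∀ ω, σ ω a * σ ω b * σ ω c * σ ω d
        = ∏ i ∈ ({a, b, c, d} : Finset (Fin n)), σ ω i := by
      intro ω
      rw [show ({a, b, c, d} : Finset (Fin n)) = insert a (insert b (insert c {d})) from rfl,
        Finset.prod_insert (by simp [hab, hac, had]),
        Finset.prod_insert (by simp [hbc, hbd]),
        Finset.prod_insert (by simp [hcd]), Finset.prod_singleton]
      ring
    simp_rw [h1]
    refine prodzero _ ⟨a, by simp⟩ ?_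
    refine le_trans (Finset.card_insert_le _ _) ?_
    refine le_trans (Nat.add_le_add_right (Finset.card_insert_le _ _) 1) ?_
    refine le_trans (Nat.add_le_add_right (Nat.add_le_add_right (Finset.card_insert_le _ _) 1) 1) ?_
    simp
  -- notation
  set S : Ω → ℝ := fun ω => ∑ i, σ ω i * v i with hSdef
  have hSmeas : Measurable S := by
    apply Finset.measurable_sum
    exact fun i _ => (hmeas i).mul_const (v i)
  -- expectation of σ_a σ_b in if-form
  have pair' : ∀ a b : Fin n, ∫ ω, σ ω a * σ ω b ∂μ = if a = b then 1 else 0 := by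
    intro a b
    by_cases h : a = b
    · subst h; rw [if_pos rfl]; simp_rw [sq1]; simp
    · rw [if_neg h]; exact pairint a b h
  -- integrability of monomials
  have int2 : ∀ i j : Fin n, Integrable (fun ω => σ ω i * σ ω j * (v i * v j)) μ := by
    intro i j
    refine intble _ (|v i * v j|) (((hmeas i).mul (hmeas j)).mul_const _) (fun ω => ?_)
    rw [abs_mul, abs_mul, sabs, sabs]
    simp
  have int4 : ∀ i j k l : Fin n,
      Integrable (fun ω => σ ω i * σ ω j * σ ω k * σ ω l * (v i * v j * v k * v l)) μ := by
    intro i j k l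
    refine intble _ (|v i * v j * v k * v l|)
      ((((hmeas i).mul (hmeas j)).mul (hmeas k)).mul (hmeas l) |>.mul_const _) (fun ω => ?_)
    rw [abs_mul, abs_mul, abs_mul, abs_mul, sabs, sabs, sabs, sabs]
    simp
  -- second moment
  have e2 : ∀ ω, S ω * S ω = ∑ i, ∑ j, σ ω i * σ ω j * (v i * v j) := by
    intro ω
    rw [hSdef, Finset.sum_mul_sum]
    exact Finset.sum_congr rfl fun i _ => Finset.sum_congr rfl fun j _ => by ring
  have m2 : ∫ ω, S ω * S ω ∂μ = A := by
    simp_rw [e2]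
    rw [integral_finset_sum _ (fun i _ => integrable_finset_sum _ (fun j _ => int2 i j))]
    have : ∀ i : Fin n, ∫ ω, ∑ j, σ ω i * σ ω j * (v i * v j) ∂μ = v i * v i := by
      intro i
      rw [integral_finset_sum _ (fun j _ => int2 i j)]
      have : ∀ j : Fin n, ∫ ω, σ ω i * σ ω j * (v i * v j) ∂μ
          = (if i = j then 1 else 0) * (v i * v j) := by
        intro j; rw [integral_mul_const, pair']
      simp_rw [this, ite_mul, one_mul, zero_mul]
      simp [Finset.sum_ite_eq]
    simp_rw [this, hAdef, sq]
  -- fourth moment: per-term bound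
  have quadbound : ∀ i j k l : Fin n,
      ∫ ω, σ ω i * σ ω j * σ ω k * σ ω l * (v i * v j * v k * v l) ∂μ ≤
        (if i = j then v i * v j else 0) * (if k = l then v k * v l else 0)
      + (if i = k then v i * v k else 0) * (if j = l then v j * v l else 0)
      + (if i = l then v i * v l else 0) * (if j = k then v j * v k else 0) := by
    intro i j k l
    rw [integral_mul_const]
    by_cases hij : i = j
    · subst hij
      by_cases hkl : k = l
      · -- pairing (i,i)(k,k): integral equals the product exactly
        subst hkl
        have hc : ∫ ω, σ ω i * σ ω i * σ ω k * σ ω k ∂μ = 1 := by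
          have h : ∀ ω : Ω, σ ω i * σ ω i * σ ω k * σ ω k = 1 := by
            intro ω; rw [sq1, one_mul, sq1]
          simp_rw [h]; simp
        rw [hc, one_mul]
        simp only [if_pos rfl, if_true]
        split_ifs with h <;> nlinarith [sq_nonneg (v i * v k)]
      · -- i = j, k ≠ l : integral is zero
        have hc : ∫ ω, σ ω i * σ ω i * σ ω k * σ ω l ∂μ = 0 := by
          have h : ∀ ω : Ω, σ ω i * σ ω i * σ ω k * σ ω l = σ ω k * σ ω l := by
            intro ω; linear_combination (σ ω k * σ ω l) * sq1 ω i
          simp_rw [h]; exact pairint k l hkl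
        rw [hc, zero_mul]
        have h23 : ¬(i = k) ∨ ¬(i = l) := by
          by_contra h; push_neg at h; exact hkl (h.1.symm.trans h.2)
        rcases h23 with h | h <;> simp [h, hkl]
    · have hji : ¬ j = i := fun h => hij h.symm
      by_cases hik : i = k
      · subst hik
        by_cases hjl : j = l
        · -- pairing (i,k)(j,l)
          subst hjl
          have hc : ∫ ω, σ ω i * σ ω j * σ ω i * σ ω j ∂μ = 1 := by
            have h : ∀ ω : Ω, σ ω i * σ ω j * σ ω i * σ ω j = 1 := by
              intro ω; linear_combination (σ ω j * σ ω j) * sq1 ω i + sq1 ω j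
            simp_rw [h]; simp
          rw [hc, one_mul]
          simp only [hij, hji, if_false, if_pos rfl, if_true, zero_mul, mul_zero,
            add_zero, zero_add]
          nlinarith [sq_nonneg (v i * v j)]
        · -- i = k, j ≠ l : zero
          have hc : ∫ ω, σ ω i * σ ω j * σ ω i * σ ω l ∂μ = 0 := by
            have h : ∀ ω : Ω, σ ω i * σ ω j * σ ω i * σ ω l = σ ω j * σ ω l := by
              intro ω; linear_combination (σ ω j * σ ω l) * sq1 ω i
            simp_rw [h]; exact pairint j l hjl
          rw [hc, zero_mul]
          simp [hij, hji, hjl]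
      · by_cases hil : i = l
        · subst hil
          by_cases hjk : j = k
          · -- pairing (i,l)(j,k)
            subst hjk
            have hc : ∫ ω, σ ω i * σ ω j * σ ω j * σ ω i ∂μ = 1 := by
              have h : ∀ ω : Ω, σ ω i * σ ω j * σ ω j * σ ω i = 1 := by
                intro ω; linear_combination (σ ω j * σ ω j) * sq1 ω i + sq1 ω j
              simp_rw [h]; simp
            rw [hc, one_mul]
            simp only [hij, hji, hik, if_false, if_pos rfl, if_true, zero_mul, mul_zero,
              add_zero, zero_add]
            nlinarith [sq_nonneg (v i * v j)]
          · -- i = l, j ≠ k : zero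
            have hc : ∫ ω, σ ω i * σ ω j * σ ω k * σ ω i ∂μ = 0 := by
              have h : ∀ ω : Ω, σ ω i * σ ω j * σ ω k * σ ω i = σ ω j * σ ω k := by
                intro ω; linear_combination (σ ω j * σ ω k) * sq1 ω i
              simp_rw [h]; exact pairint j k hjk
            rw [hc, zero_mul]
            simp [hij, hik, hjk]
        · -- i distinct from j, k, l : zero
          have hc : ∫ ω, σ ω i * σ ω j * σ ω k * σ ω l ∂μ = 0 := by
            by_cases hjk : j = k
            · subst hjk
              have h : ∀ ω : Ω, σ ω i * σ ω j * σ ω j * σ ω l = σ ω i * σ ω l := by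
                intro ω; linear_combination (σ ω i * σ ω l) * sq1 ω j
              simp_rw [h]; exact pairint i l hil
            · by_cases hjl : j = l
              · subst hjl
                have h : ∀ ω : Ω, σ ω i * σ ω j * σ ω k * σ ω j = σ ω i * σ ω k := by
                  intro ω; linear_combination (σ ω i * σ ω k) * sq1 ω j
                simp_rw [h]; exact pairint i k hik
              · by_cases hkl : k = l
                · subst hkl
                  have h : ∀ ω : Ω, σ ω i * σ ω j * σ ω k * σ ω k = σ ω i * σ ω j := by
                    intro ω; linear_combination (σ ω i * σ ω j) * sq1 ω k
                  simp_rw [h]; exact pairint i j hij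
                · exact quadint i j k l hij hik hil hjk hjl hkl
          rw [hc, zero_mul]
          simp [hij, hik, hil]
  -- fourth moment expansion
  have e4 : ∀ ω, (S ω * S ω) * (S ω * S ω)
      = ∑ i, ∑ k, ∑ j, ∑ l, σ ω i * σ ω j * σ ω k * σ ω l * (v i * v j * v k * v l) := by
    intro ω
    rw [e2 ω, Finset.sum_mul_sum]
    refine Finset.sum_congr rfl fun i _ => Finset.sum_congr rfl fun k _ => ?_
    rw [Finset.sum_mul_sum]
    exact Finset.sum_congr rfl fun j _ => Finset.sum_congr rfl fun l _ => by ring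
  -- fourth moment bound
  have m4 : ∫ ω, (S ω * S ω) * (S ω * S ω) ∂μ ≤ 3 * (A * A) := by
    have key : ∫ ω, (S ω * S ω) * (S ω * S ω) ∂μ
        = ∑ i, ∑ k, ∑ j, ∑ l,
            ∫ ω, σ ω i * σ ω j * σ ω k * σ ω l * (v i * v j * v k * v l) ∂μ := by
      simp_rw [e4]
      rw [integral_finset_sum _ (fun i _ => integrable_finset_sum _ (fun k _ =>
        integrable_finset_sum _ (fun j _ => integrable_finset_sum _ (fun l _ => int4 i j k l))))]
      refine Finset.sum_congr rfl fun i _ => ?_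
      rw [integral_finset_sum _ (fun k _ =>
        integrable_finset_sum _ (fun j _ => integrable_finset_sum _ (fun l _ => int4 i j k l)))]
      refine Finset.sum_congr rfl fun k _ => ?_
      rw [integral_finset_sum _ (fun j _ => integrable_finset_sum _ (fun l _ => int4 i j k l))]
      refine Finset.sum_congr rfl fun j _ => ?_
      rw [integral_finset_sum _ (fun l _ => int4 i j k l)]
    rw [key]
    have hle : ∑ i, ∑ k, ∑ j, ∑ l,
          ∫ ω, σ ω i * σ ω j * σ ω k * σ ω l * (v i * v j * v k * v l) ∂μ
        ≤ ∑ i, ∑ k, ∑ j, ∑ l,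
          ((if i = j then v i * v j else 0) * (if k = l then v k * v l else 0)
          + (if i = k then v i * v k else 0) * (if j = l then v j * v l else 0)
          + (if i = l then v i * v l else 0) * (if j = k then v j * v k else 0)) :=
      Finset.sum_le_sum fun i _ => Finset.sum_le_sum fun k _ => Finset.sum_le_sum fun j _ =>
        Finset.sum_le_sum fun l _ => quadbound i j k l
    refine le_trans hle (le_of_eq ?_)
    have hAA : ∑ i, v i * v i = A := by
      rw [hAdef]; exact Finset.sum_congr rfl fun i _ => (pow_two (v i)).symm
    have s1 : ∀ i k : Fin n, ∑ j, ∑ l,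
        (if i = j then v i * v j else 0) * (if k = l then v k * v l else 0)
        = (v i * v i) * (v k * v k) := by
      intro i k
      rw [← Finset.sum_mul_sum]
      simp [Finset.sum_ite_eq]
    have s2 : ∀ i k : Fin n, ∑ j, ∑ l,
        (if i = k then v i * v k else 0) * (if j = l then v j * v l else 0)
        = (if i = k then v i * v k else 0) * A := by
      intro i k
      simp_rw [← Finset.mul_sum]
      congr 1
      rw [← hAA]
      exact Finset.sum_congr rfl fun j _ => by simp [Finset.sum_ite_eq]
    have s3 : ∀ i k : Fin n, ∑ j, ∑ l,
        (if i = l then v i * v l else 0) * (if j = k then v j * v k else 0)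
        = (v i * v i) * (v k * v k) := by
      intro i k
      simp_rw [← Finset.sum_mul, Finset.sum_ite_eq, Finset.mem_univ, if_true, ← Finset.mul_sum,
        Finset.sum_ite_eq', Finset.mem_univ, if_true]
    have t1 : ∑ i, ∑ k, (v i * v i) * (v k * v k) = A * A := by
      rw [← Finset.sum_mul_sum, hAA]
    have t2 : ∑ i, ∑ k, (if i = k then v i * v k else 0) * A = A * A := by
      simp_rw [← Finset.sum_mul]
      rw [show (∑ i, ∑ k, if i = k then v i * v k else 0) = A from by
        rw [← hAA]; exact Finset.sum_congr rfl fun i _ => by simp [Finset.sum_ite_eq]]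
    calc ∑ i, ∑ k, ∑ j, ∑ l,
          ((if i = j then v i * v j else 0) * (if k = l then v k * v l else 0)
          + (if i = k then v i * v k else 0) * (if j = l then v j * v l else 0)
          + (if i = l then v i * v l else 0) * (if j = k then v j * v k else 0))
        = ∑ i, ∑ k, ((v i * v i) * (v k * v k)
            + (if i = k then v i * v k else 0) * A + (v i * v i) * (v k * v k)) := by
          refine Finset.sum_congr rfl fun i _ => Finset.sum_congr rfl fun k _ => ?_
          simp only [Finset.sum_add_distrib]
          rw [s1 i k, s2 i k, s3 i k]
      _ = 3 * (A * A) := by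
          simp only [Finset.sum_add_distrib]
          rw [t1, t2]
          ring
  -- Paley–Zygmund argument
  set X : Ω → ℝ := fun ω => S ω * S ω with hXdef
  have hXmeas : Measurable X := hSmeas.mul hSmeas
  have hSb : ∀ ω, |S ω| ≤ ∑ i, |v i| := by
    intro ω
    refine le_trans (Finset.abs_sum_le_sum_abs _ _) (Finset.sum_le_sum fun i _ => ?_)
    rw [abs_mul, sabs, one_mul]
  have hVnn : (0:ℝ) ≤ ∑ i, |v i| := Finset.sum_nonneg fun i _ => abs_nonneg _
  have hXb : ∀ ω, |X ω| ≤ (∑ i, |v i|) * (∑ i, |v i|) := by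
    intro ω
    rw [hXdef, abs_mul]
    exact mul_le_mul (hSb ω) (hSb ω) (abs_nonneg _) hVnn
  have hXint : Integrable X μ := intble _ _ hXmeas hXb
  have hXXint : Integrable (fun ω => X ω * X ω) μ := by
    refine intble _ ((∑ i, |v i|) * (∑ i, |v i|) * ((∑ i, |v i|) * (∑ i, |v i|)))
      (hXmeas.mul hXmeas) (fun ω => ?_)
    rw [abs_mul]
    exact mul_le_mul (hXb ω) (hXb ω) (abs_nonneg _) (mul_nonneg hVnn hVnn)
  set Ev : Set Ω := {ω | 2 / 3 * A ≤ X ω} with hEvdef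
  have hEvm : MeasurableSet Ev := measurableSet_le measurable_const hXmeas
  set g : Ω → ℝ := Ev.indicator (fun _ => (1:ℝ)) with hgdef
  have hg : ∀ ω, g ω = if ω ∈ Ev then 1 else 0 := fun ω => Set.indicator_apply _ _ _
  have hgmeas : Measurable g := measurable_const.indicator hEvm
  have hgint : Integrable g μ := by
    refine intble _ 1 hgmeas (fun ω => ?_)
    rw [hg]; split_ifs <;> norm_num
  have hgval : ∫ ω, g ω ∂μ = (μ Ev).toReal := by
    rw [hgdef]
    have := integral_indicator_const (1:ℝ) hEvm (μ := μ)
    simpa [Measure.real] using this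
  have hXgint : Integrable (fun ω => X ω * g ω) μ := by
    refine intble _ ((∑ i, |v i|) * (∑ i, |v i|)) (hXmeas.mul hgmeas) (fun ω => ?_)
    rw [abs_mul]
    calc |X ω| * |g ω| ≤ ((∑ i, |v i|) * (∑ i, |v i|)) * 1 := by
          refine mul_le_mul (hXb ω) ?_ (abs_nonneg _) (mul_nonneg hVnn hVnn)
          rw [hg]; split_ifs <;> norm_num
      _ = (∑ i, |v i|) * (∑ i, |v i|) := mul_one _
  set p : ℝ := (μ Ev).toReal with hpdef
  have hp0 : 0 ≤ p := ENNReal.toReal_nonneg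
  set Ig : ℝ := ∫ ω, X ω * g ω ∂μ with hIgdef
  set I2 : ℝ := ∫ ω, X ω * X ω ∂μ with hI2def
  -- step 1 : A ≤ 2/3 A + Ig
  have step1 : A ≤ 2 / 3 * A + Ig := by
    have hpt : ∀ ω, X ω ≤ 2 / 3 * A + X ω * g ω := by
      intro ω
      by_cases hω : ω ∈ Ev
      · rw [hg, if_pos hω, mul_one]
        nlinarith [hA0]
      · rw [hg, if_neg hω, mul_zero, add_zero]
        have := hω
        simp only [hEvdef, Set.mem_setOf_eq, not_le] at this
        linarith
    have hconst : Integrable (fun _ : Ω => 2 / 3 * A) μ := integrable_const _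
    have haddint : Integrable (fun ω => 2 / 3 * A + X ω * g ω) μ := hconst.add hXgint
    have hmono := integral_mono hXint haddint hpt
    rw [m2] at hmono
    rw [integral_add hconst hXgint, integral_const] at hmono
    simpa using hmono
  have hIg : A / 3 ≤ Ig := by linarith
  -- Cauchy–Schwarz by discriminant
  have key : ∀ t : ℝ, 0 ≤ p * (t * t) + (-(2 * Ig)) * t + I2 := by
    intro t
    have hnn : 0 ≤ ∫ ω, (X ω - t * g ω) * (X ω - t * g ω) ∂μ :=
      integral_nonneg fun ω => mul_self_nonneg _
    have hexp : ∀ ω, (X ω - t * g ω) * (X ω - t * g ω)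
        = X ω * X ω - 2 * t * (X ω * g ω) + t * t * g ω := by
      intro ω
      have hgg : g ω * g ω = g ω := by rw [hg]; split_ifs <;> norm_num
      linear_combination (t * t) * hgg
    simp_rw [hexp] at hnn
    have h3 : Integrable (fun ω => 2 * t * (X ω * g ω)) μ := hXgint.const_mul (2 * t)
    have h1 : Integrable (fun ω => X ω * X ω - 2 * t * (X ω * g ω)) μ := hXXint.sub h3
    have h2 : Integrable (fun ω => t * t * g ω) μ := hgint.const_mul (t * t)
    rw [integral_add h1 h2, integral_sub hXXint h3, integral_const_mul,
      integral_const_mul, hgval] at hnn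
    rw [← hIgdef, ← hI2def] at hnn
    nlinarith [hnn]
  have hdisc := discrim_le_zero key
  rw [discrim] at hdisc
  have hcs : Ig * Ig ≤ p * I2 := by nlinarith [hdisc]
  have hI2le : I2 ≤ 3 * (A * A) := m4
  -- conclude
  have hfinal : 1 / 27 ≤ p := by
    nlinarith [mul_le_mul_of_nonneg_left hI2le hp0, mul_pos hA0 hA0, hcs, hIg, hA0]
  have hset : {ω | 2 / 3 * A ≤ (∑ i, σ ω i * v i) ^ 2} = Ev := by
    ext ω
    simp only [hEvdef, Set.mem_setOf_eq, hXdef, hSdef, pow_two]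
  rw [show {ω | 2 / 3 * ∑ i, v i ^ 2 ≤ (∑ i, σ ω i * v i) ^ 2}
      = {ω | 2 / 3 * A ≤ (∑ i, σ ω i * v i) ^ 2} from by rw [hAdef], hset]
  exact hfinal
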